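/- Let Ω : H → Z/2 be a quadratic form on a Z/2-vector space H with symplectic form ·, i.e. Ω(a+b) = Ω(a) + Ω(b) + a·b for all a,b. If Ω vanishes at 0 and positively spans under the quadratic relation, then for any two symplectic bases {aᵢ,bᵢ} and {a'ᵢ,b'ᵢ} of H, Σᵢ Ω(aᵢ)Ω(bᵢ) = Σᵢ Ω(a'ᵢ)Ω(b'ᵢ) in Z/2 (Arf's theorem: the Arf invariant is independent of the choice of symplectic basis). -/

import Mathlib

/-- The sign character `(-1)^z` on `ZMod 2`. -/
private def arfChi : ZMod 2 → ℤ := fun z => if z = 0 then 1 else -1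

private lemma arfChi_zero : arfChi 0 = 1 := rfl

private lemma arfChi_add : ∀ a b : ZMod 2, arfChi (a + b) = arfChi a * arfChi b := by decide

private lemma arfChi_inj : ∀ a b : ZMod 2, arfChi a = arfChi b → a = b := by decide

private lemma arfChi_local : ∀ u v : ZMod 2,
    ∑ p : ZMod 2 × ZMod 2, arfChi (p.1 * u + p.2 * v + p.1 * p.2) = 2 * arfChi (u * v) := by
  decide

private lemma arfChi_sum {ι : Type*} (s : Finset ι) (t : ι → ZMod 2) :
    arfChi (∑ i ∈ s, t i) = ∏ i ∈ s, arfChi (t i) := by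
  classical
  induction s using Finset.induction_on with
  | empty => simp [arfChi_zero]
  | insert a s ha ih =>
    rw [Finset.sum_insert ha, Finset.prod_insert ha, arfChi_add, ih]

/-- `Ω` of a sum of pairwise `B`-orthogonal vectors is the sum of the `Ω`s. -/
private lemma omega_orth_sum {H : Type*} [AddCommGroup H] [Module (ZMod 2) H]
    (B : H →ₗ[ZMod 2] H →ₗ[ZMod 2] ZMod 2)
    (Ω : H → ZMod 2) (hΩ0 : Ω 0 = 0)
    (hquad : ∀ a b : H, Ω (a + b) = Ω a + Ω b + B a b)
    {ι : Type*} (s : Finset ι) (v : ι → H)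
    (horth : ∀ i ∈ s, ∀ j ∈ s, i ≠ j → B (v i) (v j) = 0) :
    Ω (∑ i ∈ s, v i) = ∑ i ∈ s, Ω (v i) := by
  classical
  induction s using Finset.induction_on with
  | empty => simpa using hΩ0
  | @insert a s ha ih =>
    rw [Finset.sum_insert ha, Finset.sum_insert ha, hquad,
      ih (fun i hi j hj hij => horth i (Finset.mem_insert_of_mem hi) j
        (Finset.mem_insert_of_mem hj) hij), map_sum]
    have : ∀ j ∈ s, (B (v a)) (v j) = 0 := fun j hj =>
      horth a (Finset.mem_insert_self a s) j (Finset.mem_insert_of_mem hj)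
        (by rintro rfl; exact ha hj)
    rw [Finset.sum_eq_zero this, add_zero]

/-- Reindexing equivalence for coefficient functions. -/
private def arfE (g : ℕ) : (Fin g → ZMod 2 × ZMod 2) ≃ (Fin g ⊕ Fin g → ZMod 2) :=
  { toFun := fun p => Sum.elim (fun i => (p i).1) (fun i => (p i).2)
    invFun := fun c i => (c (Sum.inl i), c (Sum.inr i))
    left_inv := fun p => by funext i; simp
    right_inv := fun c => by funext j; cases j <;> simp }

/-- Gauss sum computation: for a symplectic basis `e`, the character sum over all
coefficient functions equals `2^g` times the sign of the Arf invariant. -/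
private lemma arf_gauss_sum {H : Type*} [AddCommGroup H] [Module (ZMod 2) H] {g : ℕ}
    (B : H →ₗ[ZMod 2] H →ₗ[ZMod 2] ZMod 2)
    (Ω : H → ZMod 2) (hΩ0 : Ω 0 = 0)
    (hquad : ∀ a b : H, Ω (a + b) = Ω a + Ω b + B a b)
    (e : Module.Basis (Fin g ⊕ Fin g) (ZMod 2) H)
    (heAB : ∀ i j, B (e (Sum.inl i)) (e (Sum.inr j)) = if i = j then 1 else 0)
    (heAA : ∀ i j, B (e (Sum.inl i)) (e (Sum.inl j)) = 0)
    (heBB : ∀ i j, B (e (Sum.inr i)) (e (Sum.inr j)) = 0) :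
    ∑ c : Fin g ⊕ Fin g → ZMod 2, arfChi (Ω (∑ j, c j • e j)) =
      2 ^ g * arfChi (∑ i, Ω (e (Sum.inl i)) * Ω (e (Sum.inr i))) := by
  classical
  -- B is symmetric (forced by hquad)
  have hsymm : ∀ x y : H, B x y = B y x := by
    intro x y
    have h1 := hquad x y
    have h2 := hquad y x
    rw [add_comm y x] at h2
    have := h1.symm.trans h2
    rw [add_comm (Ω y) (Ω x)] at this
    exact add_left_cancel this
  -- Ω is ZMod-2-homogeneous
  have hsmul : ∀ (c : ZMod 2) (x : H), Ω (c • x) = c * Ω x := by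
    intro c x
    rcases (by decide : ∀ c : ZMod 2, c = 0 ∨ c = 1) c with rfl | rfl
    · simpa using hΩ0
    · simp
  -- expansion of Ω on coordinates
  have hexp : ∀ c : Fin g ⊕ Fin g → ZMod 2,
      Ω (∑ j, c j • e j) = ∑ i : Fin g,
        (c (Sum.inl i) * Ω (e (Sum.inl i)) + c (Sum.inr i) * Ω (e (Sum.inr i))
          + c (Sum.inl i) * c (Sum.inr i)) := by
    intro c
    have hsplit : ∑ j, c j • e j
        = ∑ i : Fin g, (c (Sum.inl i) • e (Sum.inl i) + c (Sum.inr i) • e (Sum.inr i)) := by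
      rw [Fintype.sum_sum_type, ← Finset.sum_add_distrib]
    rw [hsplit]
    have horth : ∀ i ∈ (Finset.univ : Finset (Fin g)), ∀ j ∈ Finset.univ, i ≠ j →
        B (c (Sum.inl i) • e (Sum.inl i) + c (Sum.inr i) • e (Sum.inr i))
          (c (Sum.inl j) • e (Sum.inl j) + c (Sum.inr j) • e (Sum.inr j)) = 0 := by
      intro i _ j _ hij
      have hBA : B (e (Sum.inr i)) (e (Sum.inl j)) = 0 := by
        rw [hsymm, heAB, if_neg (fun h => hij h.symm)]
      simp [heAA, heBB, heAB, hBA, if_neg hij]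
    rw [omega_orth_sum B Ω hΩ0 hquad _ _ horth]
    refine Finset.sum_congr rfl fun i _ => ?_
    rw [hquad, hsmul, hsmul]
    simp [heAB]
    ring
  -- rewrite each summand as a product over Fin g
  have hstep : ∀ c : Fin g ⊕ Fin g → ZMod 2,
      arfChi (Ω (∑ j, c j • e j)) = ∏ i : Fin g,
        arfChi (c (Sum.inl i) * Ω (e (Sum.inl i)) + c (Sum.inr i) * Ω (e (Sum.inr i))
          + c (Sum.inl i) * c (Sum.inr i)) := by
    intro c
    rw [hexp c, arfChi_sum]
  simp only [hstep]
  -- reindex coefficient functions by pairs of coordinates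
  rw [← Equiv.sum_comp (arfE g)]
  simp only [arfE, Equiv.coe_fn_mk, Sum.elim_inl, Sum.elim_inr]
  -- factor the sum as a product of local sums
  rw [show (∑ p : Fin g → ZMod 2 × ZMod 2, ∏ i : Fin g,
        arfChi ((p i).1 * Ω (e (Sum.inl i)) + (p i).2 * Ω (e (Sum.inr i))
          + (p i).1 * (p i).2))
      = ∏ i : Fin g, ∑ q : ZMod 2 × ZMod 2,
        arfChi (q.1 * Ω (e (Sum.inl i)) + q.2 * Ω (e (Sum.inr i)) + q.1 * q.2) from by
    rw [Finset.prod_univ_sum (fun _ => Finset.univ)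
      (fun i (q : ZMod 2 × ZMod 2) =>
        arfChi (q.1 * Ω (e (Sum.inl i)) + q.2 * Ω (e (Sum.inr i)) + q.1 * q.2)),
      Fintype.piFinset_univ]]
  rw [arfChi_sum]
  calc (∏ i : Fin g, ∑ q : ZMod 2 × ZMod 2,
          arfChi (q.1 * Ω (e (Sum.inl i)) + q.2 * Ω (e (Sum.inr i)) + q.1 * q.2))
      = ∏ i : Fin g, 2 * arfChi (Ω (e (Sum.inl i)) * Ω (e (Sum.inr i))) := by
        exact Finset.prod_congr rfl fun i _ => arfChi_local _ _
    _ = 2 ^ g * ∏ i : Fin g, arfChi (Ω (e (Sum.inl i)) * Ω (e (Sum.inr i))) := by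
        rw [Finset.prod_mul_distrib, Finset.prod_const, Finset.card_univ, Fintype.card_fin]

/-- Arf's theorem: for a quadratic form `Ω` refining a symplectic form `B` on a
`ℤ/2`-vector space (`Ω(a+b) = Ω(a) + Ω(b) + B a b`, `Ω 0 = 0`), the Arf
invariant `Σᵢ Ω(aᵢ)Ω(bᵢ)` is the same for any two symplectic bases
`{aᵢ, bᵢ}` and `{a'ᵢ, b'ᵢ}`. -/
theorem stmt_13 {H : Type*} [AddCommGroup H] [Module (ZMod 2) H] {g : ℕ}
    (B : H →ₗ[ZMod 2] H →ₗ[ZMod 2] ZMod 2)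
    (Ω : H → ZMod 2) (hΩ0 : Ω 0 = 0)
    (hquad : ∀ a b : H, Ω (a + b) = Ω a + Ω b + B a b)
    (e f : Module.Basis (Fin g ⊕ Fin g) (ZMod 2) H)
    (heAB : ∀ i j, B (e (Sum.inl i)) (e (Sum.inr j)) = if i = j then 1 else 0)
    (heAA : ∀ i j, B (e (Sum.inl i)) (e (Sum.inl j)) = 0)
    (heBB : ∀ i j, B (e (Sum.inr i)) (e (Sum.inr j)) = 0)
    (hfAB : ∀ i j, B (f (Sum.inl i)) (f (Sum.inr j)) = if i = j then 1 else 0)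
    (hfAA : ∀ i j, B (f (Sum.inl i)) (f (Sum.inl j)) = 0)
    (hfBB : ∀ i j, B (f (Sum.inr i)) (f (Sum.inr j)) = 0) :
    ∑ i, Ω (e (Sum.inl i)) * Ω (e (Sum.inr i)) =
      ∑ i, Ω (f (Sum.inl i)) * Ω (f (Sum.inr i)) := by
  classical
  have he := arf_gauss_sum B Ω hΩ0 hquad e heAB heAA heBB
  have hf := arf_gauss_sum B Ω hΩ0 hquad f hfAB hfAA hfBB
  -- the two Gauss sums are equal: reindex coefficients via the change of basis
  have hsum_eq : ∑ c : Fin g ⊕ Fin g → ZMod 2, arfChi (Ω (∑ j, c j • e j)) =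
      ∑ c : Fin g ⊕ Fin g → ZMod 2, arfChi (Ω (∑ j, c j • f j)) := by
    rw [← Equiv.sum_comp (e.equivFun.symm.trans f.equivFun).toEquiv
      (fun c => arfChi (Ω (∑ j, c j • f j)))]
    refine Fintype.sum_congr _ _ fun c => ?_
    congr 1
    rw [show (∑ j, c j • e j) = e.equivFun.symm c from (e.equivFun_symm_apply _).symm,
      show (∑ j, ((e.equivFun.symm.trans f.equivFun).toEquiv c) j • f j)
        = f.equivFun.symm ((e.equivFun.symm.trans f.equivFun).toEquiv c) from
        (f.equivFun_symm_apply _).symm]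
    show Ω (e.equivFun.symm c) = Ω (f.equivFun.symm (f.equivFun (e.equivFun.symm c)))
    rw [LinearEquiv.symm_apply_apply]
  rw [he, hf] at hsum_eq
  have h2g : (2 : ℤ) ^ g ≠ 0 := pow_ne_zero _ two_ne_zero
  exact arfChi_inj _ _ (mul_left_cancel₀ h2g hsum_eq)
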